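/- Let R be a standard graded algebra over a field K which is a one-dimensional Cohen-Macaulay ring with a homogeneous non-zerodivisor x₀ of degree 1, such that dim_K R_i stabilizes to a value deg(X) for i ≫ 0. Then the graded module ω = Hom_{K[x₀]}(R, K[x₀]) (graded Hom over the polynomial subring K[x₀]) satisfies dim_K ω_i = deg(X) − dim_K R_{−i−1} for all i ∈ ℤ. -/

import Mathlib

open Polynomial Module

namespace HFDC

variable {K R : Type*} [Field K] [CommRing R] [Algebra K R]
  {𝒜 : ℕ → Submodule K R} {x₀ : R}

/-- Multiplication by `x₀ ^ (n - j)` from `𝒜 j` to `𝒜 n`, for `j ≤ n`. -/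
def nu [GradedAlgebra 𝒜] (hx₀ : x₀ ∈ 𝒜 1) (j n : ℕ) (h : j ≤ n) :
    ↥(𝒜 j) →ₗ[K] ↥(𝒜 n) where
  toFun a := ⟨x₀ ^ (n - j) * (a : R), by
    have h1 : x₀ ^ (n - j) ∈ 𝒜 (n - j) := by
      simpa using SetLike.pow_mem_graded (n - j) hx₀
    have := SetLike.mul_mem_graded h1 a.2
    rwa [Nat.sub_add_cancel h] at this⟩
  map_add' a b := by ext; simp [mul_add]
  map_smul' c a := by ext; simp [mul_smul_comm]

@[simp] lemma nu_apply [GradedAlgebra 𝒜] (hx₀ : x₀ ∈ 𝒜 1) (j n : ℕ) (h : j ≤ n)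
    (a : ↥(𝒜 j)) : (nu hx₀ j n h a : R) = x₀ ^ (n - j) * (a : R) := rfl

lemma pow_nzd (hnzd : ∀ a : R, x₀ * a = 0 → a = 0) (k : ℕ) (a : R)
    (h : x₀ ^ k * a = 0) : a = 0 := by
  induction k with
  | zero => simpa using h
  | succ n ih =>
      apply ih
      apply hnzd
      rw [← mul_assoc, mul_comm x₀ (x₀ ^ n)]
      rwa [pow_succ] at h

lemma nu_inj [GradedAlgebra 𝒜] (hx₀ : x₀ ∈ 𝒜 1)
    (hnzd : ∀ a : R, x₀ * a = 0 → a = 0) (j n : ℕ) (h : j ≤ n) :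
    Function.Injective (nu (K := K) hx₀ j n h) := by
  intro a b hab
  have : x₀ ^ (n - j) * ((a : R) - b) = 0 := by
    have := congrArg (fun x : ↥(𝒜 n) => (x : R)) hab
    simp only [nu_apply] at this
    rw [mul_sub, this, sub_self]
  have := pow_nzd hnzd _ _ this
  ext
  exact sub_eq_zero.mp this

lemma pow_surj {rX : ℕ} (hstab : ∀ i ≥ rX, ∀ a ∈ 𝒜 (i + 1), ∃ b ∈ 𝒜 i, a = x₀ * b)
    {N : ℕ} (hN : rX ≤ N) (k : ℕ) : ∀ a ∈ 𝒜 (N + k), ∃ b ∈ 𝒜 N, a = x₀ ^ k * b := by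
  induction k with
  | zero => intro a ha; exact ⟨a, ha, by simp⟩
  | succ n ih =>
      intro a ha
      obtain ⟨c, hc, hac⟩ := hstab (N + n) (le_trans hN (Nat.le_add_right _ _)) a ha
      obtain ⟨b, hb, hcb⟩ := ih c hc
      exact ⟨b, hb, by rw [hac, hcb, ← mul_assoc, mul_comm x₀ (x₀ ^ n), ← pow_succ]⟩

lemma nu_surj [GradedAlgebra 𝒜] (hx₀ : x₀ ∈ 𝒜 1) {rX : ℕ}
    (hstab : ∀ i ≥ rX, ∀ a ∈ 𝒜 (i + 1), ∃ b ∈ 𝒜 i, a = x₀ * b)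
    {N n : ℕ} (hN : rX ≤ N) (h : N ≤ n) :
    Function.Surjective (nu (K := K) hx₀ N n h) := by
  intro a
  obtain ⟨b, hb, hab⟩ := pow_surj hstab hN (n - N) (a : R)
    (by rw [Nat.add_sub_cancel' h]; exact a.2)
  exact ⟨⟨b, hb⟩, by ext; simp [hab]⟩


section Rho

variable [GradedAlgebra 𝒜] (hx₀ : x₀ ∈ 𝒜 1)
  (hnzd : ∀ a : R, x₀ * a = 0 → a = 0) {rX : ℕ}
  (hstab : ∀ i ≥ rX, ∀ a ∈ 𝒜 (i + 1), ∃ b ∈ 𝒜 i, a = x₀ * b)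
  {N : ℕ} (hN : rX ≤ N)

/-- The bijection `𝒜 N ≃ 𝒜 n` for `N ≤ n`. -/
noncomputable def eps {n : ℕ} (h : N ≤ n) : ↥(𝒜 N) ≃ₗ[K] ↥(𝒜 n) :=
  LinearEquiv.ofBijective (nu hx₀ N n h)
    ⟨nu_inj hx₀ hnzd N n h, nu_surj hx₀ hstab hN h⟩

lemma eps_apply {n : ℕ} (h : N ≤ n) (a : ↥(𝒜 N)) :
    (eps hx₀ hnzd hstab hN h a : R) = x₀ ^ (n - N) * (a : R) := rfl

/-- Transfer a functional on `𝒜 N` to `𝒜 j`. -/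
noncomputable def rho (j : ℕ) : ↥(𝒜 j) →ₗ[K] ↥(𝒜 N) :=
  if h : j ≤ N then nu hx₀ j N h
  else ((eps hx₀ hnzd hstab hN (le_of_not_ge h)).symm : ↥(𝒜 j) →ₗ[K] ↥(𝒜 N))

lemma rho_of_le {j : ℕ} (h : j ≤ N) (a : ↥(𝒜 j)) :
    rho hx₀ hnzd hstab hN j a = nu hx₀ j N h a := by
  rw [rho, dif_pos h]

lemma rho_self (a : ↥(𝒜 N)) : rho hx₀ hnzd hstab hN N a = a := by
  rw [rho_of_le hx₀ hnzd hstab hN (le_refl N)]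
  ext
  simp

lemma rho_succ (j : ℕ) (a : ↥(𝒜 j)) (hm : x₀ * (a : R) ∈ 𝒜 (j + 1)) :
    rho hx₀ hnzd hstab hN (j + 1) ⟨x₀ * (a : R), hm⟩ = rho hx₀ hnzd hstab hN j a := by
  by_cases h1 : j + 1 ≤ N
  · rw [rho_of_le hx₀ hnzd hstab hN h1, rho_of_le hx₀ hnzd hstab hN (Nat.le_of_succ_le h1)]
    ext
    simp only [nu_apply]
    rw [← mul_assoc, ← pow_succ]
    congr 2
    omega
  · have hNj : N ≤ j := by omega
    have : rho hx₀ hnzd hstab hN (j + 1) ⟨x₀ * (a : R), hm⟩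
        = (eps hx₀ hnzd hstab hN (by omega : N ≤ j + 1)).symm ⟨x₀ * (a : R), hm⟩ := by
      rw [rho, dif_neg (by omega)]; rfl
    rw [this]
    rw [LinearEquiv.symm_apply_eq]
    by_cases h2 : j = N
    · subst h2
      rw [rho_self]
      ext
      rw [eps_apply]
      simp
    · have hNj' : N < j := by omega
      have hrj : rho hx₀ hnzd hstab hN j a
          = (eps hx₀ hnzd hstab hN (le_of_lt hNj')).symm a := by
        rw [rho, dif_neg (by omega)]; rfl
      rw [hrj]
      set b := (eps hx₀ hnzd hstab hN (le_of_lt hNj')).symm a with hb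
      have hab : (a : R) = x₀ ^ (j - N) * (b : R) := by
        have := (eps hx₀ hnzd hstab hN (le_of_lt hNj')).apply_symm_apply a
        have := congrArg (fun x : ↥(𝒜 j) => (x : R)) this
        rw [← this, eps_apply]
      ext
      rw [eps_apply]
      show x₀ * (a : R) = _
      rw [hab, ← mul_assoc, ← pow_succ']
      congr 2
      omega

end Rho


section Phi

variable [GradedAlgebra 𝒜] (hx₀ : x₀ ∈ 𝒜 1)
  (hnzd : ∀ a : R, x₀ * a = 0 → a = 0) {rX : ℕ}
  (hstab : ∀ i ≥ rX, ∀ a ∈ 𝒜 (i + 1), ∃ b ∈ 𝒜 i, a = x₀ * b)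
  {N : ℕ} (hN : rX ≤ N) (ψ : Module.Dual K ↥(𝒜 N)) (i : ℤ)

noncomputable def ell (j : ℕ) : ↥(𝒜 j) →ₗ[K] Polynomial K :=
  (ψ ∘ₗ rho hx₀ hnzd hstab hN j).smulRight (Polynomial.X ^ ((j : ℤ) + i).toNat)

lemma ell_apply (j : ℕ) (a : ↥(𝒜 j)) :
    ell hx₀ hnzd hstab hN ψ i j a
      = ψ (rho hx₀ hnzd hstab hN j a) • (Polynomial.X : Polynomial K) ^ ((j : ℤ) + i).toNat :=
  rfl

noncomputable def phi : R →ₗ[K] Polynomial K :=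
  (DirectSum.toModule K ℕ _ (ell hx₀ hnzd hstab hN ψ i)) ∘ₗ
    (DirectSum.decomposeAlgEquiv 𝒜).toLinearMap

lemma phi_coe (j : ℕ) (a : ↥(𝒜 j)) :
    phi hx₀ hnzd hstab hN ψ i (a : R) = ell hx₀ hnzd hstab hN ψ i j a := by
  rw [phi, LinearMap.comp_apply, AlgEquiv.toLinearMap_apply,
    DirectSum.decomposeAlgEquiv_apply, DirectSum.decompose_coe,
    ← DirectSum.lof_eq_of K, DirectSum.toModule_lof]

end Phi

end HFDC

open HFDC

theorem hilbertFunction_dual_canonical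
    (K R : Type*) [Field K] [CommRing R] [Algebra K R]
    (𝒜 : ℕ → Submodule K R) [GradedAlgebra 𝒜]
    [∀ i, FiniteDimensional K (𝒜 i)]
    (x₀ : R) (hx₀ : x₀ ∈ 𝒜 1)
    (hnzd : ∀ a : R, x₀ * a = 0 → a = 0)
    (D rX : ℕ)
    (hD : ∀ i ≥ rX, Module.finrank K (𝒜 i) = D)
    (hstab : ∀ i ≥ rX, ∀ a ∈ 𝒜 (i + 1), ∃ b ∈ 𝒜 i, a = x₀ * b)
    (i : ℤ) :
    Module.finrank K (Submodule.span K
        {φ : R →ₗ[K] Polynomial K |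
          (∀ r : R, φ (x₀ * r) = Polynomial.X * φ r) ∧
          ∀ j : ℕ, ∀ a ∈ 𝒜 j,
            φ a ∈ Submodule.span K
              {p : Polynomial K | ∃ m : ℕ, (m : ℤ) = (j : ℤ) + i ∧ p = Polynomial.X ^ m}})
      + (if h : 0 ≤ -i - 1 then Module.finrank K (𝒜 (-i - 1).toNat) else 0)
      = D := by
  classical
  set N : ℕ := rX + i.natAbs + 1 with hNdef
  have hN : rX ≤ N := by omega
  set d : ℕ := (-i - 1).toNat with hddef
  have hdN : d < N := by omega
  set e : ℕ := ((N : ℤ) + i).toNat with hedef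
  have he : (e : ℤ) = (N : ℤ) + i := by omega
  -- the space of functionals as a submodule
  let Msub : Submodule K (R →ₗ[K] Polynomial K) :=
    { carrier := {φ : R →ₗ[K] Polynomial K |
        (∀ r : R, φ (x₀ * r) = Polynomial.X * φ r) ∧
        ∀ j : ℕ, ∀ a ∈ 𝒜 j,
          φ a ∈ Submodule.span K
            {p : Polynomial K | ∃ m : ℕ, (m : ℤ) = (j : ℤ) + i ∧ p = Polynomial.X ^ m}}
      add_mem' := by
        rintro φ₁ φ₂ ⟨h1, h1'⟩ ⟨h2, h2'⟩
        refine ⟨fun r => ?_, fun j a ha => ?_⟩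
        · simp only [LinearMap.add_apply, h1 r, h2 r, mul_add]
        · simpa using add_mem (h1' j a ha) (h2' j a ha)
      zero_mem' := by
        refine ⟨fun r => by simp, fun j a ha => by simp⟩
      smul_mem' := by
        rintro c φ ⟨h1, h2⟩
        refine ⟨fun r => ?_, fun j a ha => ?_⟩
        · simp only [LinearMap.smul_apply, h1 r, mul_smul_comm]
        · simpa using Submodule.smul_mem _ c (h2 j a ha) }
  have hspan : Submodule.span K
      {φ : R →ₗ[K] Polynomial K |
        (∀ r : R, φ (x₀ * r) = Polynomial.X * φ r) ∧
        ∀ j : ℕ, ∀ a ∈ 𝒜 j,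
          φ a ∈ Submodule.span K
            {p : Polynomial K | ∃ m : ℕ, (m : ℤ) = (j : ℤ) + i ∧ p = Polynomial.X ^ m}}
      = Msub := Submodule.span_eq Msub
  rw [hspan]
  -- the constraint subspace
  let Wsub : Submodule K ↥(𝒜 N) :=
    if _ : i < 0 then LinearMap.range (nu (K := K) hx₀ d N (le_of_lt hdN)) else ⊥
  have hWpos : i < 0 → Wsub = LinearMap.range (nu (K := K) hx₀ d N (le_of_lt hdN)) :=
    fun h => dif_pos h
  have hWneg : ¬ i < 0 → Wsub = ⊥ := fun h => dif_neg h
  -- the evaluation map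
  let T : (R →ₗ[K] Polynomial K) →ₗ[K] Module.Dual K ↥(𝒜 N) :=
    (LinearMap.llcomp K ↥(𝒜 N) (Polynomial K) K (Polynomial.lcoeff K e)) ∘ₗ
      (LinearMap.lcomp K (Polynomial K) ((𝒜 N).subtype))
  let Φ : ↥Msub →ₗ[K] Module.Dual K ↥(𝒜 N) := T ∘ₗ Msub.subtype
  have hΦapp : ∀ (x : ↥Msub) (a : ↥(𝒜 N)),
      Φ x a = ((x : R →ₗ[K] Polynomial K) (a : R)).coeff e := fun x a => rfl
  -- set descriptions
  have hempty : ∀ j : ℕ, (j : ℤ) + i < 0 →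
      {p : Polynomial K | ∃ m : ℕ, (m : ℤ) = (j : ℤ) + i ∧ p = Polynomial.X ^ m} = ∅ := by
    intro j hj
    ext p
    simp only [Set.mem_setOf_eq, Set.mem_empty_iff_false, iff_false, not_exists]
    intro m hm
    omega
  have hsingle : ∀ j : ℕ, 0 ≤ (j : ℤ) + i →
      {p : Polynomial K | ∃ m : ℕ, (m : ℤ) = (j : ℤ) + i ∧ p = Polynomial.X ^ m}
        = {(Polynomial.X : Polynomial K) ^ ((j : ℤ) + i).toNat} := by
    intro j hj
    ext p
    simp only [Set.mem_setOf_eq, Set.mem_singleton_iff]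
    constructor
    · rintro ⟨m, hm, rfl⟩
      have : m = ((j : ℤ) + i).toNat := by omega
      rw [this]
    · rintro rfl
      exact ⟨((j : ℤ) + i).toNat, by omega, rfl⟩
  -- membership in Msub forces vanishing in degrees j with j + i < 0
  have hzero_of_neg : ∀ (φ : R →ₗ[K] Polynomial K), φ ∈ Msub →
      ∀ j : ℕ, (j : ℤ) + i < 0 → ∀ a ∈ 𝒜 j, φ a = 0 := by
    rintro φ ⟨_, h2⟩ j hj a ha
    have := h2 j a ha
    rw [hempty j hj, Submodule.span_empty, Submodule.mem_bot] at this
    exact this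
  -- iterated multiplicativity
  have hpow : ∀ (φ : R →ₗ[K] Polynomial K), (∀ r : R, φ (x₀ * r) = Polynomial.X * φ r) →
      ∀ (k : ℕ) (r : R), φ (x₀ ^ k * r) = Polynomial.X ^ k * φ r := by
    intro φ h1 k
    induction k with
    | zero => intro r; simp
    | succ n ih =>
        intro r
        rw [pow_succ, pow_succ, mul_comm (x₀ ^ n) x₀, mul_assoc, h1, ih,
          mul_comm ((Polynomial.X : Polynomial K) ^ n) Polynomial.X, mul_assoc]
  -- φ vanishes on 𝒜 N iff its Φ-image vanishes
  have hstep0 : ∀ (φ : R →ₗ[K] Polynomial K), φ ∈ Msub →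
      (∀ a : ↥(𝒜 N), (φ (a : R)).coeff e = 0) → ∀ a : ↥(𝒜 N), φ (a : R) = 0 := by
    rintro φ ⟨h1, h2⟩ hc a
    have hmem := h2 N (a : R) a.2
    rw [hsingle N (by omega)] at hmem
    obtain ⟨c, hc'⟩ := Submodule.mem_span_singleton.mp hmem
    have hee : ((N : ℤ) + i).toNat = e := by omega
    rw [hee] at hc'
    have : (φ (a : R)).coeff e = c := by
      rw [← hc']
      simp [Polynomial.coeff_smul, Polynomial.coeff_X_pow]
    rw [← hc', ← this, hc a, zero_smul]
  -- injectivity of Φ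
  have hker : ∀ x : ↥Msub, Φ x = 0 → x = 0 := by
    intro x hx
    obtain ⟨φ, hφ⟩ := x
    have hc : ∀ a : ↥(𝒜 N), (φ (a : R)).coeff e = 0 := by
      intro a
      have := LinearMap.congr_fun hx a
      rwa [hΦapp] at this
    have h0 : ∀ a : ↥(𝒜 N), φ (a : R) = 0 := hstep0 φ hφ hc
    obtain ⟨h1, h2⟩ := hφ
    have hj : ∀ (j : ℕ) (a : R), a ∈ 𝒜 j → φ a = 0 := by
      intro j a ha
      rcases le_or_gt j N with h | h
      · have hXk : (Polynomial.X : Polynomial K) ^ (N - j) * φ a = 0 := by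
          rw [← hpow φ h1]
          exact h0 (nu hx₀ j N h ⟨a, ha⟩)
        rcases mul_eq_zero.mp hXk with h' | h'
        · exact absurd h' (pow_ne_zero _ Polynomial.X_ne_zero)
        · exact h'
      · obtain ⟨b, hb, hab⟩ := pow_surj hstab hN (j - N) a
          (by rw [Nat.add_sub_cancel' (le_of_lt h)]; exact ha)
        rw [hab, hpow φ h1, h0 ⟨b, hb⟩, mul_zero]
    have : ∀ r : R, φ r = 0 := by
      intro r
      refine DirectSum.Decomposition.inductionOn 𝒜 (motive := fun r => φ r = 0) ?_ ?_ ?_ r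
      · simp
      · intro j a; exact hj j a a.2
      · intro m m' hm hm'; rw [map_add, hm, hm', add_zero]
    exact Subtype.ext (LinearMap.ext this)
  have hinj : Function.Injective Φ :=
    fun a b hab => sub_eq_zero.mp (hker (a - b) (by rw [LinearMap.map_sub Φ a b, hab, sub_self]))
  -- range Φ ≤ annihilator of Wsub
  have hsub : LinearMap.range Φ ≤ Wsub.dualAnnihilator := by
    rintro ψ ⟨x, rfl⟩
    rw [Submodule.mem_dualAnnihilator]
    intro w hw
    by_cases hi : i < 0
    · rw [hWpos hi] at hw
      obtain ⟨b, rfl⟩ := hw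
      obtain ⟨φ, h1, h2⟩ := x
      rw [hΦapp]
      have : ((⟨φ, h1, h2⟩ : ↥Msub) : R →ₗ[K] Polynomial K) = φ := rfl
      rw [this, nu_apply, hpow φ h1, hzero_of_neg φ ⟨h1, h2⟩ d (by omega) (b : R) b.2,
        mul_zero, Polynomial.coeff_zero]
    · rw [hWneg hi] at hw
      rw [Submodule.mem_bot] at hw
      rw [hw, map_zero]
  -- annihilator of Wsub ≤ range Φ
  have hsup : Wsub.dualAnnihilator ≤ LinearMap.range Φ := by
    intro ψ hψ
    have hV : ∀ j : ℕ, (j : ℤ) + i < 0 → ∀ a : ↥(𝒜 j),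
        ψ (rho hx₀ hnzd hstab hN j a) = 0 := by
      intro j hj a
      have hi : i < 0 := by omega
      have hjd : j ≤ d := by omega
      rw [rho_of_le hx₀ hnzd hstab hN (by omega)]
      have hmem : nu (K := K) hx₀ j N (by omega) a ∈ Wsub := by
        rw [hWpos hi]
        refine ⟨⟨x₀ ^ (d - j) * (a : R), ?_⟩, ?_⟩
        · have h1 : x₀ ^ (d - j) ∈ 𝒜 (d - j) := by
            simpa using SetLike.pow_mem_graded (d - j) hx₀
          have := SetLike.mul_mem_graded h1 a.2
          rwa [Nat.sub_add_cancel hjd] at this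
        · ext
          simp only [nu_apply]
          rw [← mul_assoc, ← pow_add]
          congr 2
          omega
      exact (Submodule.mem_dualAnnihilator ψ).mp hψ _ hmem
    set φ := phi hx₀ hnzd hstab hN ψ i with hφdef
    have hφ1 : ∀ r : R, φ (x₀ * r) = Polynomial.X * φ r := by
      intro r
      refine DirectSum.Decomposition.inductionOn 𝒜
        (motive := fun r => φ (x₀ * r) = Polynomial.X * φ r) ?_ ?_ ?_ r
      · simp
      · intro j a
        have hm : x₀ * (a : R) ∈ 𝒜 (j + 1) := by
          have := SetLike.mul_mem_graded hx₀ a.2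
          rwa [add_comm] at this
        have hcast : φ (x₀ * (a : R)) = ell hx₀ hnzd hstab hN ψ i (j + 1) ⟨x₀ * (a : R), hm⟩ :=
          phi_coe hx₀ hnzd hstab hN ψ i (j + 1) ⟨x₀ * (a : R), hm⟩
        have hca : φ (a : R) = ell hx₀ hnzd hstab hN ψ i j a :=
          phi_coe hx₀ hnzd hstab hN ψ i j a
        rw [hcast, ell_apply, rho_succ, hca, ell_apply]
        by_cases hj : 0 ≤ (j : ℤ) + i
        · have hexp : ((((j : ℕ) + 1 : ℕ) : ℤ) + i).toNat = ((j : ℤ) + i).toNat + 1 := by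
            push_cast
            omega
          rw [hexp, pow_succ', mul_smul_comm]
        · rw [hV j (by omega) a]
          simp
      · intro m m' hm hm'
        rw [mul_add, map_add, map_add, hm, hm', mul_add]
    have hφ2 : ∀ j : ℕ, ∀ a ∈ 𝒜 j,
        φ a ∈ Submodule.span K
          {p : Polynomial K | ∃ m : ℕ, (m : ℤ) = (j : ℤ) + i ∧ p = Polynomial.X ^ m} := by
      intro j a ha
      have hca : φ a = ell hx₀ hnzd hstab hN ψ i j ⟨a, ha⟩ :=
        phi_coe hx₀ hnzd hstab hN ψ i j ⟨a, ha⟩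
      rw [hca, ell_apply]
      by_cases hj : 0 ≤ (j : ℤ) + i
      · exact Submodule.smul_mem _ _
          (Submodule.subset_span ⟨((j : ℤ) + i).toNat, by omega, rfl⟩)
      · rw [hV j (by omega)]
        simp
    refine ⟨⟨φ, hφ1, hφ2⟩, ?_⟩
    ext a
    rw [hΦapp]
    have : ((⟨φ, hφ1, hφ2⟩ : ↥Msub) : R →ₗ[K] Polynomial K) = φ := rfl
    have hca : φ (a : R) = ell hx₀ hnzd hstab hN ψ i N a :=
      phi_coe hx₀ hnzd hstab hN ψ i N a
    rw [this, hca, ell_apply, rho_self]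
    have hee : ((N : ℤ) + i).toNat = e := by omega
    rw [hee]
    simp [Polynomial.coeff_smul, Polynomial.coeff_X_pow]
  have hrange : LinearMap.range Φ = Wsub.dualAnnihilator := le_antisymm hsub hsup
  -- dimension count
  have hMr : Module.finrank K ↥Msub = Module.finrank K ↥(Wsub.dualAnnihilator) := by
    rw [← hrange]
    exact (LinearEquiv.ofInjective Φ hinj).finrank_eq
  have hq : Module.finrank K ↥(Wsub.dualAnnihilator) + Module.finrank K ↥Wsub = D := by
    have h1 : Module.finrank K (↥(𝒜 N) ⧸ Wsub)
        = Module.finrank K ↥(Wsub.dualAnnihilator) :=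
      LinearEquiv.finrank_eq (Subspace.quotEquivAnnihilator Wsub)
    have h2 := Submodule.finrank_quotient_add_finrank Wsub
    rw [h1] at h2
    rw [h2]
    exact hD N hN
  have hW : Module.finrank K ↥Wsub
      = (if _ : (0 : ℤ) ≤ -i - 1 then Module.finrank K (𝒜 (-i - 1).toNat) else 0) := by
    by_cases hi : i < 0
    · rw [dif_pos (by omega : (0 : ℤ) ≤ -i - 1), hWpos hi, ← hddef]
      exact ((LinearEquiv.ofInjective (nu (K := K) hx₀ d N (le_of_lt hdN))
        (nu_inj hx₀ hnzd d N (le_of_lt hdN))).finrank_eq).symm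
    · rw [dif_neg (by omega : ¬ (0 : ℤ) ≤ -i - 1), hWneg hi, finrank_bot]
  rw [hMr, ← hW]
  exact hq
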